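/- The 1-form α of Equation (4.1) is a contact form on the Brieskorn link: for every z ∈ Σ(a), the alternating 2-form ω is nondegenerate on the hyperplane ξ_z = {v ∈ ℂ^{n+1} : Σ_j a_j z_j^{a_j−1} v_j = 0, Re⟨z,v⟩ = 0, and α_z(v) = 0}; that is, for every nonzero v ∈ ξ_z there exists w ∈ ξ_z with ω(v,w) ≠ 0. -/

import Mathlib

/-- The 1-form `α` of Equation (4.1) is a contact form on the Brieskorn link:
at every `z ∈ Σ(a)`, the 2-form `ω = dα`, `ω(u,v) = (1/2) Σ_j a_j Im(conj u_j · v_j)`,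
is nondegenerate on the hyperplane
`ξ_z = {v : Σ_j a_j z_j^{a_j-1} v_j = 0, Re⟨z,v⟩ = 0, α_z(v) = 0}`,
where `α_z(v) = (1/4) Σ_j a_j Im(conj z_j · v_j)`. -/
theorem brieskorn_contact_condition
    (n : ℕ) (hn : 1 ≤ n) (a : Fin (n + 1) → ℕ) (ha : ∀ j, 2 ≤ a j)
    (z : Fin (n + 1) → ℂ)
    (hz1 : ∑ j, z j ^ a j = 0)
    (hz2 : ∑ j, Complex.normSq (z j) = 1) :
    ∀ v : Fin (n + 1) → ℂ, v ≠ 0 →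
      (∑ j, (a j : ℂ) * z j ^ (a j - 1) * v j = 0) →
      (∑ j, ((starRingEnd ℂ) (z j) * v j).re = 0) →
      ((1 / 4 : ℝ) * ∑ j, (a j : ℝ) * ((starRingEnd ℂ) (z j) * v j).im = 0) →
      ∃ w : Fin (n + 1) → ℂ,
        (∑ j, (a j : ℂ) * z j ^ (a j - 1) * w j = 0) ∧
        (∑ j, ((starRingEnd ℂ) (z j) * w j).re = 0) ∧
        ((1 / 4 : ℝ) * ∑ j, (a j : ℝ) * ((starRingEnd ℂ) (z j) * w j).im = 0) ∧
        (1 / 2 : ℝ) * ∑ j, (a j : ℝ) * ((starRingEnd ℂ) (v j) * w j).im ≠ 0 := by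
  intro v hv hf hg hα
  have haR : ∀ j, (0:ℝ) < (a j : ℝ) := fun j => by
    have := ha j; exact_mod_cast Nat.lt_of_lt_of_le two_pos this |>.trans_le le_rfl
  have hane : ∀ j, ((a j : ℝ)) ≠ 0 := fun j => (haR j).ne'
  have haC : ∀ j, ((a j : ℂ)) ≠ 0 := fun j => by
    exact_mod_cast Nat.cast_ne_zero.mpr (by have := ha j; omega)
  set S : ℝ := ∑ j, ((a j : ℝ))⁻¹ * Complex.normSq (z j) with hSdef
  have hSpos : 0 < S := by
    have hex : ∃ j, Complex.normSq (z j) ≠ 0 := by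
      by_contra h
      push_neg at h
      rw [Finset.sum_congr rfl (fun j _ => h j)] at hz2
      simp at hz2
    obtain ⟨j, hj⟩ := hex
    refine Finset.sum_pos'
      (fun i _ => mul_nonneg (inv_nonneg.2 (haR i).le) (Complex.normSq_nonneg _))
      ⟨j, Finset.mem_univ j, ?_⟩
    have hpos : 0 < Complex.normSq (z j) :=
      lt_of_le_of_ne (Complex.normSq_nonneg _) (Ne.symm hj)
    exact mul_pos (inv_pos.2 (haR j)) hpos
  set B : ℝ := ∑ j, ((starRingEnd ℂ) (z j) * v j).im with hBdef
  set C : ℝ := ∑ j, (a j : ℝ) * ((starRingEnd ℂ) (z j) * v j).re with hCdef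
  set T : ℝ := ∑ j, (a j : ℝ) * Complex.normSq (v j) with hTdef
  have hα' : ∑ j, (a j : ℝ) * ((starRingEnd ℂ) (z j) * v j).im = 0 := by linarith
  clear_value S B C T
  -- the strict Cauchy-Schwarz inequality
  have hkey : 0 < T - B ^ 2 / S := by
    set t0 : ℝ := -(B / S) with ht0
    have hq : ∀ j, (a j : ℝ) * Complex.normSq (v j + (t0 * (a j : ℝ)⁻¹ : ℝ) * Complex.I * z j)
        = (a j : ℝ) * Complex.normSq (v j) + 2 * t0 * ((starRingEnd ℂ) (z j) * v j).im
          + t0 ^ 2 * ((a j : ℝ)⁻¹ * Complex.normSq (z j)) := by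
      intro j
      have h := hane j
      simp only [Complex.normSq_apply, Complex.mul_re, Complex.mul_im, Complex.add_re,
        Complex.add_im, Complex.ofReal_re, Complex.ofReal_im, Complex.I_re, Complex.I_im,
        Complex.conj_re, Complex.conj_im]
      field_simp [Complex.normSq_apply, Complex.mul_re, Complex.mul_im, Complex.add_re,
        Complex.add_im]
      ring
    have hqsum : ∑ j, (a j : ℝ) * Complex.normSq (v j + (t0 * (a j : ℝ)⁻¹ : ℝ) * Complex.I * z j)
        = T - B ^ 2 / S := by
      rw [Finset.sum_congr rfl (fun j _ => hq j)]
      rw [Finset.sum_add_distrib, Finset.sum_add_distrib, ← Finset.mul_sum, ← Finset.mul_sum]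
      rw [← hBdef, ← hTdef, ← hSdef, ht0]
      field_simp
      ring
    have hq0 : 0 ≤ T - B ^ 2 / S := by
      rw [← hqsum]
      exact Finset.sum_nonneg fun j _ => mul_nonneg (haR j).le (Complex.normSq_nonneg _)
    rcases lt_or_eq_of_le hq0 with h | h
    · exact h
    -- equality case: each term vanishes, so v j = (B/S) * i * z j / a j
    have hz0 : ∀ j, v j + (t0 * (a j : ℝ)⁻¹ : ℝ) * Complex.I * z j = 0 := by
      have hall := (Finset.sum_eq_zero_iff_of_nonneg
        (fun j _ => mul_nonneg (haR j).le (Complex.normSq_nonneg _))).mp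
        (by rw [hqsum, ← h])
      intro j
      have := hall j (Finset.mem_univ j)
      have h2 : Complex.normSq (v j + (t0 * (a j : ℝ)⁻¹ : ℝ) * Complex.I * z j) = 0 := by
        rcases mul_eq_zero.mp this with h' | h'
        · exact absurd h' (hane j)
        · exact h'
      exact Complex.normSq_eq_zero.mp h2
    have hvj : ∀ j, v j = (-(t0) * (a j : ℝ)⁻¹ : ℝ) * Complex.I * z j := by
      intro j
      have := hz0 j
      push_cast
      push_cast at this
      linear_combination this
    -- plug into α(v) = 0
    have : ∑ j, (a j : ℝ) * ((starRingEnd ℂ) (z j) * v j).im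
        = -t0 * ∑ j, Complex.normSq (z j) := by
      rw [Finset.mul_sum]
      refine Finset.sum_congr rfl (fun j _ => ?_)
      rw [hvj j]
      have h := hane j
      simp only [Complex.normSq_apply, Complex.mul_re, Complex.mul_im, Complex.add_re,
        Complex.add_im, Complex.ofReal_re, Complex.ofReal_im, Complex.I_re, Complex.I_im,
        Complex.conj_re, Complex.conj_im]
      field_simp [Complex.normSq_apply, Complex.mul_re, Complex.mul_im]
      ring
    rw [hα', hz2, mul_one] at this
    have hB0 : B = 0 := by
      have : t0 = 0 := by linarith
      rw [ht0] at this
      field_simp at this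
      linarith
    have ht00 : t0 = 0 := by rw [ht0, hB0]; simp
    exfalso
    apply hv
    funext j
    rw [hvj j, ht00]
    simp
  -- now build w
  set c : ℂ := ((B / S : ℝ) : ℂ) - ((C : ℝ) : ℂ) * Complex.I with hcdef
  have hcre : c.re = B / S := by rw [hcdef]; simp
  have hcim : c.im = -C := by rw [hcdef]; simp
  clear_value c
  refine ⟨fun j => Complex.I * v j + c * ((((a j : ℝ))⁻¹ : ℝ) : ℂ) * z j, ?_, ?_, ?_, ?_⟩
  · -- first condition
    have h1 : ∀ j, (a j : ℂ) * z j ^ (a j - 1) *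
          (Complex.I * v j + c * ((((a j : ℝ))⁻¹ : ℝ) : ℂ) * z j)
        = Complex.I * ((a j : ℂ) * z j ^ (a j - 1) * v j) + c * z j ^ a j := by
      intro j
      have hp : z j ^ (a j - 1) * z j = z j ^ a j := by
        rw [← pow_succ, Nat.sub_add_cancel (by have := ha j; omega)]
      have hinv : (a j : ℂ) * ((a j : ℂ))⁻¹ = 1 := mul_inv_cancel₀ (haC j)
      push_cast
      linear_combination c * ((a j : ℂ) * ((a j : ℂ))⁻¹) * hp + c * z j ^ a j * hinv
    rw [Finset.sum_congr rfl (fun j _ => h1 j), Finset.sum_add_distrib, ← Finset.mul_sum,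
      ← Finset.mul_sum, hf, hz1]
    ring
  · -- second condition
    have h1 : ∀ j, ((starRingEnd ℂ) (z j) *
          (Complex.I * v j + c * ((((a j : ℝ))⁻¹ : ℝ) : ℂ) * z j)).re
        = -((starRingEnd ℂ) (z j) * v j).im + (B / S) * ((a j : ℝ)⁻¹ * Complex.normSq (z j)) := by
      intro j
      simp only [Complex.add_re, Complex.add_im, Complex.mul_re, Complex.mul_im,
        Complex.I_re, Complex.I_im, Complex.ofReal_re, Complex.ofReal_im,
        Complex.normSq_apply, Complex.conj_re, Complex.conj_im, hcre, hcim]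
      ring
    rw [Finset.sum_congr rfl (fun j _ => h1 j), Finset.sum_add_distrib, ← Finset.mul_sum,
      ← hSdef]
    have : ∑ j, -((starRingEnd ℂ) (z j) * v j).im = -B := by
      rw [hBdef, ← Finset.sum_neg_distrib]
    rw [this]
    field_simp
    ring
  · -- third condition
    have h1 : ∀ j, (a j : ℝ) * ((starRingEnd ℂ) (z j) *
          (Complex.I * v j + c * ((((a j : ℝ))⁻¹ : ℝ) : ℂ) * z j)).im
        = (a j : ℝ) * ((starRingEnd ℂ) (z j) * v j).re + (-C) * Complex.normSq (z j) := by
      intro j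
      have h := hane j
      simp only [Complex.add_re, Complex.add_im, Complex.mul_re, Complex.mul_im,
        Complex.I_re, Complex.I_im, Complex.ofReal_re, Complex.ofReal_im,
        Complex.normSq_apply, Complex.conj_re, Complex.conj_im, hcre, hcim]
      field_simp
      ring
    rw [Finset.sum_congr rfl (fun j _ => h1 j), Finset.sum_add_distrib, ← Finset.mul_sum,
      ← hCdef, hz2]
    ring
  · -- nondegeneracy
    have h1 : ∀ j, (a j : ℝ) * ((starRingEnd ℂ) (v j) *
          (Complex.I * v j + c * ((((a j : ℝ))⁻¹ : ℝ) : ℂ) * z j)).im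
        = (a j : ℝ) * Complex.normSq (v j) - (B / S) * ((starRingEnd ℂ) (z j) * v j).im
          - C * ((starRingEnd ℂ) (z j) * v j).re := by
      intro j
      have h := hane j
      simp only [Complex.add_re, Complex.add_im, Complex.mul_re, Complex.mul_im,
        Complex.I_re, Complex.I_im, Complex.ofReal_re, Complex.ofReal_im,
        Complex.normSq_apply, Complex.conj_re, Complex.conj_im, hcre, hcim]
      field_simp
      ring
    rw [Finset.sum_congr rfl (fun j _ => h1 j)]
    rw [Finset.sum_sub_distrib, Finset.sum_sub_distrib, ← Finset.mul_sum, ← Finset.mul_sum,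
      ← hTdef, ← hBdef, hg]
    have : T - B / S * B - C * 0 = T - B ^ 2 / S := by ring
    rw [this]
    positivity
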